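/- For every n ≥ 1 and every k with 1 ≤ k ≤ n, RS(2n, 2k) = C(n-1, k-1), where RS(n,s) is the symmetric R-decomposition count defined by the explicit formula in the context. Consequently Σ_{k=1}^{n} RS(2n,2k) = 2^{n-1}. -/

import Mathlib

open Finset

/-- The number `R(n,s)` of type I/III R-decompositions with `n` crossings and
`s` Seifert circles, given by the explicit binomial sum. Note that in natural
number arithmetic `⌈(s-1)/2⌉ = s/2`, `⌊(s-1)/2⌋ = (s-1)/2`, `⌊(s+1)/2⌋ = (s+1)/2`,
and `((-1)^s+1)/2` is `1` if `s` is even and `0` otherwise. -/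
def Rcount (n s : ℕ) : ℕ :=
  ∑ j ∈ Finset.Icc 1 (min (s / 2) (n / 2 - (s - 1) / 2)),
    Nat.choose (j + (s - 1) / 2 - 1) (2 * j - (if Even s then 1 else 0) - 1) *
      Nat.choose (n - j - (s + 1) / 2) (j + (s - 1) / 2 - 1)

/-- The number `RS(n,s)` of symmetric type III R-decompositions with `n` crossings
and `s` Seifert circles; it is `0` for odd `s`, and for `s = 2k` it is given by the
explicit binomial sum, where the indicator `((-1)^{(j+k)n}+1)/2` is `1` exactly when
`(j+k)*n` is even. Note `⌈(j+k)/2⌉ = (j+k+1)/2` in natural number arithmetic. -/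
def RScount (n s : ℕ) : ℕ :=
  if Even s then
    ∑ j ∈ Finset.Icc 1 (min (s / 2) (n / 2 + 1 - s / 2)),
      (if Even ((j + s / 2) * n) then 1 else 0) *
        (Nat.choose ((j + s / 2) / 2 - 1) (j - 1) *
          Nat.choose (n / 2 - (j + s / 2 + 1) / 2) ((j + s / 2) / 2 - 1))
  else 0

/-- Auxiliary binomial sum `B(N,K) = ∑_i C(i, K-i) C(N-i, i)`. -/
def Baux (N K : ℕ) : ℕ :=
  ∑ i ∈ Finset.range (K+1), Nat.choose i (K - i) * Nat.choose (N - i) i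

lemma Baux_zero (N : ℕ) : Baux N 0 = 1 := by simp [Baux]

lemma Baux_succ_self (N : ℕ) : Baux N (N+1) = 0 := by
  apply Finset.sum_eq_zero
  intro i _
  by_cases h : 2*i ≤ N
  · have h1 : i < N+1-i := by omega
    simp [Nat.choose_eq_zero_of_lt h1]
  · have h1 : N - i < i := by omega
    simp [Nat.choose_eq_zero_of_lt h1]

lemma pas1 (M t : ℕ) :
    Nat.choose (M+1-t) (t+1) = Nat.choose (M-t) (t+1) + Nat.choose (M-t) t := by
  rcases le_or_gt t M with h|h
  · rw [show M+1-t = (M-t)+1 by omega, Nat.choose_succ_succ']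
    omega
  · rw [show M+1-t = 0 by omega, show M-t = 0 by omega,
      Nat.choose_eq_zero_of_lt (show 0 < t+1 by omega),
      Nat.choose_eq_zero_of_lt (show 0 < t by omega)]

lemma Baux_rec (M K : ℕ) :
    Baux (M+2) (K+2) = Baux (M+1) (K+2) + Baux M (K+1) + Baux M K := by
  have hL : Baux (M+2) (K+2)
      = ∑ t ∈ range (K+2), Nat.choose (t+1) (K+1-t) * Nat.choose (M+1-t) (t+1) := by
    rw [Baux, Finset.sum_range_succ']
    have h0 : Nat.choose 0 (K+2-0) * Nat.choose (M+2-0) 0 = 0 := by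
      rw [Nat.choose_eq_zero_of_lt (show 0 < K+2-0 by omega), zero_mul]
    rw [h0, add_zero]
    apply Finset.sum_congr rfl
    intro t _
    rw [show K+2-(t+1) = K+1-t by omega, show M+2-(t+1) = M+1-t by omega]
  rw [hL]
  have hsplit : ∀ t ∈ range (K+2),
      Nat.choose (t+1) (K+1-t) * Nat.choose (M+1-t) (t+1)
        = Nat.choose (t+1) (K+1-t) * Nat.choose (M-t) (t+1)
          + Nat.choose (t+1) (K+1-t) * Nat.choose (M-t) t := by
    intro t _; rw [pas1, Nat.mul_add]
  rw [Finset.sum_congr rfl hsplit, Finset.sum_add_distrib]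
  have hS1 : Baux (M+1) (K+2)
      = ∑ t ∈ range (K+2), Nat.choose (t+1) (K+1-t) * Nat.choose (M-t) (t+1) := by
    rw [Baux, Finset.sum_range_succ']
    have h0 : Nat.choose 0 (K+2-0) * Nat.choose (M+1-0) 0 = 0 := by
      rw [Nat.choose_eq_zero_of_lt (show 0 < K+2-0 by omega), zero_mul]
    rw [h0, add_zero]
    apply Finset.sum_congr rfl
    intro t _
    rw [show K+2-(t+1) = K+1-t by omega, show M+1-(t+1) = M-t by omega]
  have hS2 : ∑ t ∈ range (K+2), Nat.choose (t+1) (K+1-t) * Nat.choose (M-t) t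
      = Baux M (K+1) + Baux M K := by
    rw [Finset.sum_range_succ]
    have htop : Nat.choose (K+1+1) (K+1-(K+1)) * Nat.choose (M-(K+1)) (K+1)
        = Nat.choose (M-(K+1)) (K+1) := by simp
    have h2 : ∀ t ∈ range (K+1),
        Nat.choose (t+1) (K+1-t) * Nat.choose (M-t) t
          = Nat.choose t (K-t) * Nat.choose (M-t) t
            + Nat.choose t (K+1-t) * Nat.choose (M-t) t := by
      intro t ht
      have htK : t ≤ K := by
        have := Finset.mem_range.mp ht; omega
      rw [show K+1-t = (K-t)+1 by omega, Nat.choose_succ_succ', Nat.add_mul,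
        show K-t+1 = K+1-t by omega]
    rw [Finset.sum_congr rfl h2, Finset.sum_add_distrib, htop]
    have hB1 : Baux M (K+1)
        = (∑ t ∈ range (K+1), Nat.choose t (K+1-t) * Nat.choose (M-t) t)
          + Nat.choose (M-(K+1)) (K+1) := by
      rw [Baux, Finset.sum_range_succ]
      simp
    have hB0 : Baux M K = ∑ t ∈ range (K+1), Nat.choose t (K-t) * Nat.choose (M-t) t := rfl
    rw [hB1, hB0]; ring
  rw [← hS1, hS2]; ring

lemma Bkey : ∀ N K : ℕ, K ≤ N+1 →
    Baux (N+1) (K+1) + Baux N K = Nat.choose (N+1) (K+1) := by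
  intro N
  induction N with
  | zero =>
    intro K hK
    interval_cases K
    · decide
    · decide
  | succ N ih =>
    intro K hK
    cases K with
    | zero =>
      rw [Baux_zero]
      have e : Baux (N+1+1) (0+1) = N+1 := by
        simp [Baux, Finset.sum_range_succ]
      rw [e, Nat.choose_one_right]
    | succ K' =>
      by_cases hKN : K' ≤ N
      · have hrec := Baux_rec N K'
        rw [show N+2 = N+1+1 from rfl, show K'+2 = K'+1+1 from rfl] at hrec
        have h1 := ih (K'+1) (by omega)
        have h2 := ih K' (by omega)
        rw [Nat.choose_succ_succ' (N+1) (K'+1)]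
        omega
      · have hK' : K' = N+1 := by omega
        subst hK'
        have e1 : Baux (N+1+1) (N+1+1+1) = 0 := Baux_succ_self (N+1+1)
        have e2 : Baux (N+1) (N+1+1) = 0 := Baux_succ_self (N+1)
        rw [e1, e2, Nat.choose_eq_zero_of_lt (by omega)]

lemma sum_range_even_odd (f : ℕ → ℕ) (h : ℕ) :
    ∑ i ∈ range (2*h), f i = ∑ t ∈ range h, f (2*t) + ∑ t ∈ range h, f (2*t+1) := by
  induction h with
  | zero => simp
  | succ h ih =>
    rw [show 2*(h+1) = (2*h)+1+1 by ring, Finset.sum_range_succ, Finset.sum_range_succ,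
      ih, Finset.sum_range_succ (fun t => f (2*t)), Finset.sum_range_succ (fun t => f (2*t+1))]
    ring

lemma sum_range_odd_split (f : ℕ → ℕ) (h : ℕ) :
    ∑ i ∈ range (2*h+1), f i = ∑ t ∈ range (h+1), f (2*t) + ∑ t ∈ range h, f (2*t+1) := by
  rw [Finset.sum_range_succ, sum_range_even_odd, Finset.sum_range_succ (fun t => f (2*t))]
  ring

lemma RS_main (n k : ℕ) (hn : 1 ≤ n) (h1 : 1 ≤ k) (hk : k ≤ n) :
    RScount (2*n) (2*k) = Nat.choose (n-1) (k-1) := by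
  have hev : Even (2*k) := even_two_mul k
  have h2k : 2*k/2 = k := by omega
  have h2n : 2*n/2 = n := by omega
  unfold RScount
  rw [if_pos hev]
  simp only [h2k, h2n]
  have hdrop : ∀ j ∈ Icc 1 (min k (n+1-k)),
      (if Even ((j+k)*(2*n)) then (1:ℕ) else 0) *
        (Nat.choose ((j+k)/2 - 1) (j-1) * Nat.choose (n - (j+k+1)/2) ((j+k)/2 - 1))
      = Nat.choose ((j+k)/2 - 1) (j-1) * Nat.choose (n - (j+k+1)/2) ((j+k)/2 - 1) := by
    intro j _
    have hx : (if Even ((j+k)*(2*n)) then (1:ℕ) else 0) = 1 := by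
      have he : Even ((j+k)*(2*n)) := ⟨(j+k)*n, by ring⟩
      simp [he]
    rw [hx, one_mul]
  rw [Finset.sum_congr rfl hdrop]
  have hext : ∑ j ∈ Icc 1 (min k (n+1-k)),
      Nat.choose ((j+k)/2 - 1) (j-1) * Nat.choose (n - (j+k+1)/2) ((j+k)/2 - 1)
      = ∑ j ∈ Icc 1 k,
      Nat.choose ((j+k)/2 - 1) (j-1) * Nat.choose (n - (j+k+1)/2) ((j+k)/2 - 1) := by
    apply Finset.sum_subset
    · intro x hx
      rw [Finset.mem_Icc] at *
      omega
    · intro j hj hj'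
      rw [Finset.mem_Icc] at hj
      simp only [Finset.mem_Icc, not_and, not_le] at hj'
      have hlt : n - (j+k+1)/2 < (j+k)/2 - 1 := by
        have := hj' hj.1
        omega
      rw [Nat.choose_eq_zero_of_lt hlt, mul_zero]
  rw [hext]
  rcases Nat.lt_or_ge k 2 with hk2|hk2
  · -- k = 1
    have hk1 : k = 1 := by omega
    subst hk1
    rw [Finset.Icc_self, Finset.sum_singleton]
    norm_num
  · -- k ≥ 2
    rw [← Finset.Ico_add_one_right_eq_Icc, Finset.sum_Ico_eq_sum_range]
    simp only [Nat.add_sub_cancel]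
    rcases Nat.even_or_odd k with ⟨h, hh⟩|⟨h, hh⟩
    · -- k = 2*h, h ≥ 1
      have hh2 : k = 2*h := by omega
      rw [hh2]
      rw [sum_range_even_odd]
      have E1 : ∑ t ∈ range h,
          Nat.choose ((1+2*t+2*h)/2 - 1) (1+2*t-1)
            * Nat.choose (n - (1+2*t+2*h+1)/2) ((1+2*t+2*h)/2 - 1)
          = Baux (n-2) (2*h-2) := by
        rw [Baux, show 2*h-2+1 = (h-1)+h by omega, Finset.sum_range_add]
        have hz : ∑ i ∈ range (h-1),
            Nat.choose i (2*h-2-i) * Nat.choose (n-2-i) i = 0 := by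
          apply Finset.sum_eq_zero
          intro i hi
          have := Finset.mem_range.mp hi
          rw [Nat.choose_eq_zero_of_lt (show i < 2*h-2-i by omega), zero_mul]
        rw [hz, zero_add]
        apply Finset.sum_congr rfl
        intro t ht
        have htu := Finset.mem_range.mp ht
        rw [show 1+2*t-1 = 2*t by omega,
          show (1+2*t+2*h)/2 - 1 = h-1+t by omega,
          show n - (1+2*t+2*h+1)/2 = n-2-(h-1+t) by omega,
          show 2*h-2-(h-1+t) = h-1+t - 2*t by omega,
          Nat.choose_symm (show 2*t ≤ h-1+t by omega)]
      have E2 : ∑ t ∈ range h,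
          Nat.choose ((1+(2*t+1)+2*h)/2 - 1) (1+(2*t+1)-1)
            * Nat.choose (n - (1+(2*t+1)+2*h+1)/2) ((1+(2*t+1)+2*h)/2 - 1)
          = Baux (n-1) (2*h-1) := by
        rw [Baux, show 2*h-1+1 = h+h by omega, Finset.sum_range_add]
        have hz : ∑ i ∈ range h,
            Nat.choose i (2*h-1-i) * Nat.choose (n-1-i) i = 0 := by
          apply Finset.sum_eq_zero
          intro i hi
          have := Finset.mem_range.mp hi
          rw [Nat.choose_eq_zero_of_lt (show i < 2*h-1-i by omega), zero_mul]
        rw [hz, zero_add]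
        apply Finset.sum_congr rfl
        intro t ht
        have htu := Finset.mem_range.mp ht
        rw [show 1+(2*t+1)-1 = 2*t+1 by omega,
          show (1+(2*t+1)+2*h)/2 - 1 = h+t by omega,
          show n - (1+(2*t+1)+2*h+1)/2 = n-1-(h+t) by omega,
          show 2*h-1-(h+t) = h+t - (2*t+1) by omega,
          Nat.choose_symm (show 2*t+1 ≤ h+t by omega)]
      rw [E1, E2]
      have key := Bkey (n-2) (2*h-2) (by omega)
      rw [show (n-2)+1 = n-1 by omega, show (2*h-2)+1 = 2*h-1 by omega] at key
      rw [show 2*h-1 = 2*h-1 from rfl]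
      omega
    · -- k = 2*h+1, h ≥ 1
      rw [hh]
      rw [sum_range_odd_split]
      have hB1 : Baux (n-1) (2*h)
          = ∑ t ∈ range (h+1),
              Nat.choose (h+t) (2*h-(h+t)) * Nat.choose (n-1-(h+t)) (h+t) := by
        rw [Baux, show 2*h+1 = h+(h+1) by omega, Finset.sum_range_add]
        have hz : ∑ i ∈ range h,
            Nat.choose i (2*h-i) * Nat.choose (n-1-i) i = 0 := by
          apply Finset.sum_eq_zero
          intro i hi
          have := Finset.mem_range.mp hi
          rw [Nat.choose_eq_zero_of_lt (show i < 2*h-i by omega), zero_mul]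
        rw [hz, zero_add]
      have hB2 : Baux (n-2) (2*h-1)
          = ∑ t ∈ range h,
              Nat.choose (h+t) (2*h-1-(h+t)) * Nat.choose (n-2-(h+t)) (h+t) := by
        have hge : 1 ≤ h := by omega
        rw [Baux, show 2*h-1+1 = h+h by omega, Finset.sum_range_add]
        have hz : ∑ i ∈ range h,
            Nat.choose i (2*h-1-i) * Nat.choose (n-2-i) i = 0 := by
          apply Finset.sum_eq_zero
          intro i hi
          have := Finset.mem_range.mp hi
          rw [Nat.choose_eq_zero_of_lt (show i < 2*h-1-i by omega), zero_mul]
        rw [hz, zero_add]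
      have E1 : ∑ t ∈ range (h+1),
          Nat.choose ((1+2*t+(2*h+1))/2 - 1) (1+2*t-1)
            * Nat.choose (n - (1+2*t+(2*h+1)+1)/2) ((1+2*t+(2*h+1))/2 - 1)
          = Baux (n-1) (2*h) := by
        rw [hB1]
        apply Finset.sum_congr rfl
        intro t ht
        have htu := Finset.mem_range.mp ht
        rw [show 1+2*t-1 = 2*t by omega,
          show (1+2*t+(2*h+1))/2 - 1 = h+t by omega,
          show n - (1+2*t+(2*h+1)+1)/2 = n-1-(h+t) by omega,
          show 2*h-(h+t) = h+t - 2*t by omega,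
          Nat.choose_symm (show 2*t ≤ h+t by omega)]
      have E2 : ∑ t ∈ range h,
          Nat.choose ((1+(2*t+1)+(2*h+1))/2 - 1) (1+(2*t+1)-1)
            * Nat.choose (n - (1+(2*t+1)+(2*h+1)+1)/2) ((1+(2*t+1)+(2*h+1))/2 - 1)
          = Baux (n-2) (2*h-1) := by
        rw [hB2]
        apply Finset.sum_congr rfl
        intro t ht
        have htu := Finset.mem_range.mp ht
        rw [show 1+(2*t+1)-1 = 2*t+1 by omega,
          show (1+(2*t+1)+(2*h+1))/2 - 1 = h+t by omega,
          show n - (1+(2*t+1)+(2*h+1)+1)/2 = n-2-(h+t) by omega,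
          show 2*h-1-(h+t) = h+t - (2*t+1) by omega,
          Nat.choose_symm (show 2*t+1 ≤ h+t by omega)]
      rw [E1, E2]
      have key := Bkey (n-2) (2*h-1) (by omega)
      rw [show (n-2)+1 = n-1 by omega, show (2*h-1)+1 = 2*h by omega] at key
      rw [show 2*h+1-1 = 2*h by omega]
      omega

theorem RScount_even_binomial (n : ℕ) (hn : 1 ≤ n) :
    (∀ k, 1 ≤ k → k ≤ n → RScount (2 * n) (2 * k) = Nat.choose (n - 1) (k - 1)) ∧
      (∑ k ∈ Finset.Icc 1 n, RScount (2 * n) (2 * k)) = 2 ^ (n - 1) := by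
  constructor
  · intro k h1 hk
    exact RS_main n k hn h1 hk
  · obtain ⟨m, rfl⟩ : ∃ m, n = m+1 := ⟨n-1, by omega⟩
    have hc : ∀ k ∈ Finset.Icc 1 (m+1),
        RScount (2*(m+1)) (2*k) = Nat.choose m (k-1) := by
      intro k hk
      rw [Finset.mem_Icc] at hk
      rw [RS_main (m+1) k hn hk.1 hk.2]
      simp
    rw [Finset.sum_congr rfl hc, ← Finset.Ico_add_one_right_eq_Icc, Finset.sum_Ico_eq_sum_range]
    simp only [Nat.add_sub_cancel]
    have : ∀ i ∈ Finset.range (m+1), Nat.choose m (1+i-1) = Nat.choose m i := by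
      intro i _
      rw [show 1+i-1 = i by omega]
    rw [Finset.sum_congr rfl this, Nat.sum_range_choose]
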